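/- Let E be a directed graph satisfying Condition (K) and let H ⊆ E⁰ be a hereditary subset. If α = α₁…αₙ is a loop in E all of whose vertices lie in E⁰ \ H, then α has an exit which avoids H: there exist an edge e ∈ E¹ and an index i with s(e) = s(αᵢ), e ≠ αᵢ, and r(e) ∉ H. -/

import Mathlib

/-- A (countable) directed graph `E = (E⁰, E¹, r, s)`:
a set of vertices, a set of edges, and range and source maps. -/
structure Digraph' where
  V : Type
  E : Type
  src : E → V
  rng : E → V

namespace Digraph'

variable (G : Digraph')

/-- `v ≥ w`: there is a path (possibly of length zero) from `v` to `w`. -/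
def Reach (v w : G.V) : Prop :=
  Relation.ReflTransGen (fun a b : G.V => ∃ e : G.E, G.src e = a ∧ G.rng e = b) v w

/-- A set `H` of vertices is hereditary if `v ∈ H` and `v ≥ w` imply `w ∈ H`. -/
def Hereditary (H : Set G.V) : Prop :=
  ∀ ⦃v w : G.V⦄, v ∈ H → G.Reach v w → w ∈ H

/-- A set `X` of vertices is saturated if every vertex `v` with `0 < |s⁻¹(v)| < ∞`
all of whose emitted edges have range in `X` itself belongs to `X`. -/
def Saturated (X : Set G.V) : Prop :=
  ∀ v : G.V, (G.src ⁻¹' {v}).Finite → (G.src ⁻¹' {v}).Nonempty →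
    (∀ e : G.E, G.src e = v → G.rng e ∈ X) → v ∈ X

/-- The saturation `Σ(X)`: the smallest saturated set containing `X`. -/
def saturation (X : Set G.V) : Set G.V :=
  ⋂₀ {Y : Set G.V | G.Saturated Y ∧ X ⊆ Y}

/-- `ΣH(X)`: the smallest saturated hereditary set containing `X`. -/
def satHered (X : Set G.V) : Set G.V :=
  ⋂₀ {Y : Set G.V | G.Saturated Y ∧ G.Hereditary Y ∧ X ⊆ Y}

end Digraph'

namespace Digraph'

variable (G : Digraph')

/-- A nonempty list of edges is a path if consecutive edges are composable. -/
def IsEdgePath (l : List G.E) : Prop :=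
  l.Chain' (fun e f : G.E => G.rng e = G.src f)

/-- A loop based at `v`: a path of positive length with source and range `v`. -/
def IsLoopAt (v : G.V) (l : List G.E) : Prop :=
  ∃ h : l ≠ [], G.IsEdgePath l ∧ G.src (l.head h) = v ∧ G.rng (l.getLast h) = v

/-- A loop: a path of positive length whose source and range coincide. -/
def IsLoop (l : List G.E) : Prop :=
  ∃ v : G.V, G.IsLoopAt v l

/-- `v` lies on a loop: `v` is one of the vertices (sources of the edges) of some loop. -/
def OnLoop (v : G.V) : Prop :=
  ∃ l : List G.E, G.IsLoop l ∧ ∃ e ∈ l, G.src e = v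

/-- Condition (K): every vertex either lies on no loop, or is the base of two loops
neither of which is an initial subpath of the other. -/
def ConditionK : Prop :=
  ∀ v : G.V, ¬ G.OnLoop v ∨
    ∃ α β : List G.E, G.IsLoopAt v α ∧ G.IsLoopAt v β ∧ ¬ α <+: β ∧ ¬ β <+: α

end Digraph'

namespace Digraph'

variable {G : Digraph'} {v : G.V}

/-- On a loop at `v`, the range of edge `j` is the source of edge `j+1` (or `v` at the end). -/
lemma loop_rng_eq {γ : List G.E} (hγ : G.IsLoopAt v γ) {j : ℕ} (h : j < γ.length) :
    G.rng (γ.get ⟨j, h⟩) =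
      if h' : j + 1 < γ.length then G.src (γ.get ⟨j + 1, h'⟩) else v := by
  obtain ⟨hne, hpath, hhead, hlast⟩ := hγ
  split_ifs with h'
  · exact List.isChain_iff_getElem.1 hpath j (by omega)
  · have hj : j = γ.length - 1 := by omega
    subst hj
    rw [← hlast, List.getLast_eq_getElem]
    rfl

/-- From the range of any edge on a loop at `v`, one can reach `v`. -/
lemma loop_reach {γ : List G.E} (hγ : G.IsLoopAt v γ) :
    ∀ (j : ℕ) (h : j < γ.length), G.Reach (G.rng (γ.get ⟨j, h⟩)) v := by
  suffices key : ∀ (k j : ℕ) (h : j < γ.length), γ.length - j ≤ k →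
      G.Reach (G.rng (γ.get ⟨j, h⟩)) v by
    exact fun j h => key γ.length j h (Nat.sub_le _ _)
  intro k
  induction k with
  | zero => intro j h hle; omega
  | succ k ih =>
    intro j h hle
    rw [loop_rng_eq hγ h]
    split_ifs with h'
    · exact Relation.ReflTransGen.head ⟨γ.get ⟨j + 1, h'⟩, rfl, rfl⟩
        (ih (j + 1) h' (by omega))
    · exact Relation.ReflTransGen.refl

end Digraph'

/-- In a graph satisfying Condition (K), every loop all of whose vertices
avoid a hereditary set `H` has an exit whose range avoids `H`. -/
theorem stmt_9 (G : Digraph') [Countable G.V] [Countable G.E] (hK : G.ConditionK)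
    (H : Set G.V) (hH : G.Hereditary H) (l : List G.E) (hl : G.IsLoop l)
    (hout : ∀ e ∈ l, G.src e ∉ H) :
    ∃ (e : G.E) (i : ℕ) (hi : i < l.length),
      G.src e = G.src (l.get ⟨i, hi⟩) ∧ e ≠ l.get ⟨i, hi⟩ ∧ G.rng e ∉ H := by
  classical
  obtain ⟨v, hv⟩ := hl
  obtain ⟨hne, hpath, hhead, hlast⟩ := hv
  have hloopl : G.IsLoopAt v l := ⟨hne, hpath, hhead, hlast⟩
  have hn : 0 < l.length := List.length_pos_iff.2 hne
  have hhead0 : G.src (l.get ⟨0, hn⟩) = v := by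
    rw [← hhead]; congr 1; exact (List.head_eq_getElem_zero hne).symm
  have hvH : v ∉ H := hhead0 ▸ hout _ (l.get_mem ⟨0, hn⟩)
  -- ranges along `l`, cyclically
  have hget : ∀ (a b : ℕ) (hab : a = b) (ha : a < l.length) (hb : b < l.length),
      l.get ⟨a, ha⟩ = l.get ⟨b, hb⟩ := by
    intro a b hab ha hb; subst hab; rfl
  have hcyc : ∀ m : ℕ, G.rng (l.get ⟨m % l.length, Nat.mod_lt _ hn⟩) =
      G.src (l.get ⟨(m + 1) % l.length, Nat.mod_lt _ hn⟩) := by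
    intro m
    rw [Digraph'.loop_rng_eq hloopl]
    split_ifs with h'
    · exact congrArg G.src (hget (m % l.length + 1) ((m + 1) % l.length)
        (by rw [← Nat.mod_add_mod, Nat.mod_eq_of_lt h']) h' (Nat.mod_lt _ hn))
    · have h1 : m % l.length = l.length - 1 := by
        have := Nat.mod_lt m hn; omega
      have h2 : (m + 1) % l.length = 0 := by
        rw [← Nat.mod_add_mod, h1]
        simp [Nat.sub_add_cancel hn]
      rw [← hhead0]
      exact congrArg G.src (hget 0 ((m + 1) % l.length) h2.symm hn (Nat.mod_lt _ hn))
  -- v lies on a loop, so Condition K provides two loops at v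
  have honloop : G.OnLoop v := ⟨l, ⟨v, hloopl⟩, l.head hne, List.head_mem hne, hhead⟩
  rcases hK v with hno | ⟨α, β, hα, hβ, hab, hba⟩
  · exact absurd honloop hno
  -- main dichotomy for a loop γ at v
  have key : ∀ γ : List G.E, G.IsLoopAt v γ →
      (∀ (i : ℕ) (h : i < γ.length),
          γ.get ⟨i, h⟩ = l.get ⟨i % l.length, Nat.mod_lt _ hn⟩) ∨
      (∃ (e : G.E) (i : ℕ) (hi : i < l.length),
        G.src e = G.src (l.get ⟨i, hi⟩) ∧ e ≠ l.get ⟨i, hi⟩ ∧ G.rng e ∉ H) := by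
    intro γ hγ
    by_cases hP : ∀ (i : ℕ) (h : i < γ.length),
        γ.get ⟨i, h⟩ = l.get ⟨i % l.length, Nat.mod_lt _ hn⟩
    · exact Or.inl hP
    right
    push_neg at hP
    have hQ : ∃ j : ℕ, ∃ h : j < γ.length,
        γ.get ⟨j, h⟩ ≠ l.get ⟨j % l.length, Nat.mod_lt _ hn⟩ := by
      obtain ⟨i, h, hne'⟩ := hP; exact ⟨i, h, hne'⟩
    obtain ⟨j, hj, hne', hmin⟩ : ∃ (j : ℕ) (h : j < γ.length),
        γ.get ⟨j, h⟩ ≠ l.get ⟨j % l.length, Nat.mod_lt _ hn⟩ ∧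
        ∀ i (h : i < γ.length), i < j →
          γ.get ⟨i, h⟩ = l.get ⟨i % l.length, Nat.mod_lt _ hn⟩ := by
      obtain ⟨hj, hne'⟩ := Nat.find_spec hQ
      exact ⟨Nat.find hQ, hj, hne', fun i h hij => by
        by_contra hc; exact Nat.find_min hQ hij ⟨h, hc⟩⟩
    refine ⟨γ.get ⟨j, hj⟩, j % l.length, Nat.mod_lt _ hn, ?_, hne', ?_⟩
    · -- sources agree
      rcases Nat.eq_zero_or_pos j with h0 | hpos
      · subst h0
        have : G.src (γ.get ⟨0, hj⟩) = v := by
          rw [← hγ.2.2.1]; congr 1; exact (List.head_eq_getElem_zero hγ.1).symm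
        rw [this, ← hhead0]
        exact congrArg G.src (hget 0 (0 % l.length) (Nat.zero_mod _).symm hn (Nat.mod_lt _ hn))
      · obtain ⟨m, rfl⟩ : ∃ m, j = m + 1 := ⟨j - 1, by omega⟩
        have hm : m < γ.length := by omega
        have h1 : G.rng (γ.get ⟨m, hm⟩) = G.src (γ.get ⟨m + 1, hj⟩) := by
          rw [Digraph'.loop_rng_eq hγ hm, dif_pos hj]
        rw [← h1, hmin m hm (by omega), hcyc m]
    · -- range avoids H
      intro hmem
      exact hvH (hH hmem (Digraph'.loop_reach hγ j hj))
  rcases key α hα with hA | h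
  · rcases key β hβ with hB | h
    · -- both match the periodic pattern: one is a prefix of the other, contradiction
      exfalso
      have pre : ∀ γ δ : List G.E,
          (∀ (i : ℕ) (h : i < γ.length),
            γ.get ⟨i, h⟩ = l.get ⟨i % l.length, Nat.mod_lt _ hn⟩) →
          (∀ (i : ℕ) (h : i < δ.length),
            δ.get ⟨i, h⟩ = l.get ⟨i % l.length, Nat.mod_lt _ hn⟩) →
          γ.length ≤ δ.length → γ <+: δ := by
        intro γ δ hγ' hδ' hlen
        have : γ = δ.take γ.length := by
          apply List.ext_get
          · simp [Nat.min_eq_left hlen]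
          · intro i h1 h2
            have h3 : i < δ.length := lt_of_lt_of_le h1 hlen
            have ht : (δ.take γ.length).get ⟨i, h2⟩ = δ.get ⟨i, h3⟩ := by
              simp [List.get_eq_getElem, List.getElem_take']
            rw [ht, hγ' i h1, hδ' i h3]
        rw [this]
        exact List.take_prefix _ _
      rcases le_total α.length β.length with hle | hle
      · exact hab (pre α β hA hB hle)
      · exact hba (pre β α hB hA hle)
    · exact h
  · exact h
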